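/- arXiv:2305.03133 — 6 statements merged into one kernel-verified Lean document; each statement's English description precedes it below -/
import Mathlib

section
/- Every word over an alphabet A has a primitive generator: for every word c̄ over A there exists a primitive word ā that generates c̄. -/
/-- A function `f : {1,…,m} → {1,…,k}` (0-indexed here) is adjacent if the
indices of consecutive values differ by at most 1. -/
def Adjacent {m k : ℕ} (f : Fin m → Fin k) : Prop :=
  ∀ (i : ℕ) (h : i + 1 < m),
    |(((f ⟨i + 1, h⟩ : Fin k) : ℕ) : ℤ) - (((f ⟨i, Nat.lt_of_succ_lt h⟩ : Fin k) : ℕ) : ℤ)| ≤ 1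

/-- A word `a` generates a word `c` if `c = a^f` for some surjective adjacent `f`. -/
def Generates {A : Type*} (a c : List A) : Prop :=
  ∃ f : Fin c.length → Fin a.length,
    Adjacent f ∧ Function.Surjective f ∧ c = List.ofFn (fun i => a.get (f i))

/-- A word is primitive if it is not generated by any strictly shorter word. -/
def Primitive {A : Type*} (a : List A) : Prop :=
  ¬ ∃ b : List A, b.length < a.length ∧ Generates b a

/-- A primitive generator of `c` is a generator of `c` that is primitive. -/
def PrimitiveGenerator {A : Type*} (a c : List A) : Prop :=
  Primitive a ∧ Generates a c

lemma generates_refl {A : Type*} (c : List A) : Generates c c := by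
  refine ⟨id, ?_, Function.surjective_id, ?_⟩
  · intro i h
    simp
  · simp [List.ofFn_get]

lemma adjacent_step {m k : ℕ} {f : Fin m → Fin k} (hf : Adjacent f)
    (j j' : Fin m) (h : |((j' : ℕ) : ℤ) - ((j : ℕ) : ℤ)| ≤ 1) :
    |((f j' : ℕ) : ℤ) - ((f j : ℕ) : ℤ)| ≤ 1 := by
  rcases abs_le.mp h with ⟨h1, h2⟩
  have : j'.val = j.val ∨ j'.val = j.val + 1 ∨ j.val = j'.val + 1 := by omega
  rcases this with h3 | h3 | h3
  · have : j' = j := Fin.ext h3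
    simp [this]
  · have hj : j.val + 1 < m := h3 ▸ j'.isLt
    have := hf j.val hj
    have e1 : (⟨j.val + 1, hj⟩ : Fin m) = j' := Fin.ext h3.symm
    have e2 : (⟨j.val, Nat.lt_of_succ_lt hj⟩ : Fin m) = j := Fin.ext rfl
    rwa [e1, e2] at this
  · have hj : j'.val + 1 < m := h3 ▸ j.isLt
    have := hf j'.val hj
    have e1 : (⟨j'.val + 1, hj⟩ : Fin m) = j := Fin.ext h3.symm
    have e2 : (⟨j'.val, Nat.lt_of_succ_lt hj⟩ : Fin m) = j' := Fin.ext rfl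
    rw [e1, e2] at this
    rw [abs_sub_comm]
    exact this

lemma generates_trans {A : Type*} {a b c : List A}
    (hab : Generates a b) (hbc : Generates b c) : Generates a c := by
  obtain ⟨f, hf, hfs, hfe⟩ := hab
  obtain ⟨g, hg, hgs, hge⟩ := hbc
  refine ⟨f ∘ g, ?_, hfs.comp hgs, ?_⟩
  · intro i h
    exact adjacent_step hf _ _ (hg i h)
  · have key : ∀ j : Fin b.length, b.get j = a.get (f j) := by
      intro j
      rw [List.get_of_eq hfe, List.get_ofFn]
      rfl
    calc c = List.ofFn (fun i => b.get (g i)) := hge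
      _ = List.ofFn (fun i => a.get ((f ∘ g) i)) := by
          congr 1
          funext i
          exact key (g i)

/-- Every word has a primitive generator. -/
theorem exists_primitive_generator {A : Type*} (c : List A) :
    ∃ a : List A, PrimitiveGenerator a c := by
  suffices H : ∀ n (c : List A), c.length ≤ n → ∃ a, Primitive a ∧ Generates a c from
    H c.length c le_rfl
  intro n
  induction n with
  | zero =>
    intro c hc
    exact ⟨c, by simp [Primitive]; omega, generates_refl c⟩
  | succ n ih =>
    intro c hc
    by_cases h : Primitive c
    · exact ⟨c, h, generates_refl c⟩
    · rw [Primitive, not_not] at h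
      obtain ⟨b, hb, hgen⟩ := h
      obtain ⟨a, ha, hag⟩ := ih b (by omega)
      exact ⟨a, ha, generates_trans hag hgen⟩
end

section
/- If a word ā over an alphabet A generates a word c̄ with |c̄| = |ā|, then c̄ = ā or c̄ = ā⁻¹; that is, ā and ā⁻¹ are the only words of length |ā| generated by ā. -/
/-- The only words of length `|a|` generated by `a` are `a` and its reversal. -/
theorem generates_eq_length {A : Type*} (a c : List A) (h : Generates a c)
    (hlen : c.length = a.length) :
    c = a ∨ c = a.reverse := by
  obtain ⟨f, hadj, hsurj, hc⟩ := h
  have hbij : Function.Bijective f :=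
    (Fintype.bijective_iff_surjective_and_card f).2 ⟨hsurj, by simp [hlen]⟩
  rcases Nat.eq_zero_or_pos c.length with hz | hpos
  · left
    have ha : a = [] := List.eq_nil_of_length_eq_zero (by omega)
    have hcnil : c = [] := List.eq_nil_of_length_eq_zero hz
    rw [ha, hcnil]
  set F : ℕ → ℤ := fun i => if hi : i < c.length then (((f ⟨i, hi⟩ : Fin a.length) : ℕ) : ℤ) else 0 with hF
  have hFval : ∀ (i : ℕ) (hi : i < c.length), F i = (((f ⟨i, hi⟩ : Fin a.length) : ℕ) : ℤ) := by
    intro i hi; simp [hF, hi]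
  have hFbound : ∀ i, i < c.length → 0 ≤ F i ∧ F i < c.length := by
    intro i hi
    rw [hFval i hi]
    constructor
    · positivity
    · have := (f ⟨i, hi⟩).isLt; omega
  have hFadj : ∀ i, i + 1 < c.length → |F (i+1) - F i| ≤ 1 := by
    intro i hi
    rw [hFval (i+1) hi, hFval i (Nat.lt_of_succ_lt hi)]
    exact hadj i hi
  have hFinj : ∀ i j, i < c.length → j < c.length → F i = F j → i = j := by
    intro i j hi hj hij
    rw [hFval i hi, hFval j hj] at hij
    have : f ⟨i, hi⟩ = f ⟨j, hj⟩ := Fin.ext (by exact_mod_cast hij)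
    have := hbij.1 this
    exact congrArg Fin.val this
  have key : (∀ (i : ℕ) (hi : i < c.length), ((f ⟨i, hi⟩ : Fin a.length) : ℕ) = i) ∨
             (∀ (i : ℕ) (hi : i < c.length), ((f ⟨i, hi⟩ : Fin a.length) : ℕ) = c.length - 1 - i) := by
    rcases Nat.lt_or_ge c.length 2 with h1 | h2
    · -- length 1
      left
      intro i hi
      have hi0 : i = 0 := by omega
      subst hi0
      have := hFbound 0 hpos
      have hv := hFval 0 hpos
      omega
    · -- length ≥ 2
      have h1n : (1:ℕ) < c.length := h2
      set d : ℤ := F 1 - F 0 with hd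
      have hdne : d ≠ 0 := by
        intro h0
        have : (1:ℕ) = 0 := hFinj 1 0 h1n hpos (by omega)
        omega
      have hdabs : |d| ≤ 1 := hFadj 0 h1n
      have hd1 : d = 1 ∨ d = -1 := by
        rw [abs_le] at hdabs; omega
      have main : ∀ i, i < c.length → F i = F 0 + d * i := by
        intro i
        induction i using Nat.strong_induction_on with
        | _ i ih =>
          intro hi
          match i with
          | 0 => simp
          | 1 => simp [hd]
          | (k+2) =>
            have hk1 : k + 1 < c.length := by omega
            have hk : k < c.length := by omega
            have e1 : F (k+1) = F 0 + d * (k+1) := ih (k+1) (by omega) hk1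
            have e0 : F k = F 0 + d * k := ih k (by omega) hk
            have hadj2 := hFadj (k+1) hi
            rw [show k+1+1 = k+2 by ring] at hadj2
            rw [abs_le] at hadj2
            have hne1 : F (k+2) ≠ F (k+1) := fun h => by
              have := hFinj (k+2) (k+1) hi hk1 h; omega
            have hne0 : F (k+2) ≠ F k := fun h => by
              have := hFinj (k+2) k hi hk h; omega
            push_cast
            push_cast at e1 e0
            rcases hd1 with hd' | hd' <;> (rw [hd'] at e1 e0 ⊢; omega)
      rcases hd1 with hd' | hd'
      · left
        have hl := main (c.length-1) (by omega)
        have hb := hFbound (c.length-1) (by omega)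
        have hb0 := hFbound 0 hpos
        have hF0 : F 0 = 0 := by
          rw [hd'] at hl
          have : ((c.length-1 : ℕ) : ℤ) = (c.length:ℤ) - 1 := by omega
          omega
        intro i hi
        have := main i hi
        rw [hd', hF0] at this
        have hv := hFval i hi
        omega
      · right
        have hl := main (c.length-1) (by omega)
        have hb := hFbound (c.length-1) (by omega)
        have hb0 := hFbound 0 hpos
        have hF0 : F 0 = (c.length:ℤ) - 1 := by
          rw [hd'] at hl
          have : ((c.length-1 : ℕ) : ℤ) = (c.length:ℤ) - 1 := by omega
          omega
        intro i hi
        have := main i hi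
        rw [hd', hF0] at this
        have hv := hFval i hi
        omega
  rcases key with hk | hk
  · left
    rw [hc]
    apply List.ext_getElem (by simpa using hlen)
    intro i h1 h2
    have h1' : i < c.length := by simpa using h1
    simp only [List.getElem_ofFn]
    have hj : f ⟨i, by simpa using h1⟩ = ⟨i, h2⟩ := Fin.ext (hk i h1')
    simp [hj]
  · right
    rw [hc]
    apply List.ext_getElem (by simpa using hlen)
    intro i h1 h2
    have h1' : i < c.length := by simpa using h1
    simp only [List.getElem_ofFn]
    rw [List.getElem_reverse]
    have h2' : a.length - 1 - i < a.length := by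
      have := h1'; omega
    have hj : f ⟨i, by simpa using h1⟩ = ⟨a.length - 1 - i, h2'⟩ := by
      apply Fin.ext
      rw [hk i h1']
      simp [← hlen]
    simp [hj]
end

section
/- Let c̄ be a word of length m over an alphabet A, and let d ∈ A be an element that does not occur in c̄. If the word c̄d (the concatenation of c̄ with the single letter d) is not primitive, then c̄ is not primitive either; in fact, there exist a word ā of length k < m and a surjective adjacent function f : {1,…,m} → {1,…,k} with f(m) = k such that ā^f = c̄. -/
/-- ℕ-valued version of `f : Fin n → Fin k`. -/
def valF {n k : ℕ} (f : Fin n → Fin k) (i : ℕ) : ℕ :=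
  if h : i < n then (f ⟨i, h⟩ : ℕ) else 0

lemma valF_eq {n k : ℕ} (f : Fin n → Fin k) {i : ℕ} (h : i < n) :
    ((f ⟨i, h⟩ : Fin k) : ℕ) = valF f i := by simp [valF, h]

lemma valF_lt {n k : ℕ} (f : Fin n → Fin k) {i : ℕ} (h : i < n) : valF f i < k := by
  rw [← valF_eq f h]; exact (f _).isLt

lemma adjacent_valF {n k : ℕ} {f : Fin n → Fin k} (hadj : Adjacent f) {i : ℕ}
    (h : i + 1 < n) :
    ((valF f (i + 1) : ℕ) : ℤ) - (valF f i : ℤ) ≤ 1 ∧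
      ((valF f i : ℕ) : ℤ) - (valF f (i + 1) : ℤ) ≤ 1 := by
  have h2 := hadj i h
  rw [abs_le] at h2
  rw [valF_eq f h, valF_eq f (Nat.lt_of_succ_lt h)] at h2
  omega

lemma surj_valF {n k : ℕ} {f : Fin n → Fin k} (hsurj : Function.Surjective f) {j : ℕ}
    (hj : j < k) : ∃ i, i < n ∧ valF f i = j := by
  obtain ⟨x, hx⟩ := hsurj ⟨j, hj⟩
  refine ⟨x.1, x.2, ?_⟩
  rw [← valF_eq f x.2]
  exact congrArg Fin.val hx

lemma valF_getElem {A : Type*} (w u : List A) (f : Fin w.length → Fin u.length)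
    (heq : w = List.ofFn (fun i => u.get (f i))) (i : ℕ) (hi : i < w.length) :
    w[i] = u[valF f i]'(valF_lt f hi) := by
  rw [List.getElem_of_eq heq hi]
  simp only [List.getElem_ofFn, List.get_eq_getElem]
  congr 1
  exact valF_eq f hi

lemma main_aux {A : Type*} (c : List A) (d : A) (b : List A)
    (hk : b.length < c.length + 1) (hm : 0 < c.length)
    (f : Fin (c ++ [d]).length → Fin b.length)
    (hadj : Adjacent f) (hsurj : Function.Surjective f)
    (heq : c ++ [d] = List.ofFn (fun i => b.get (f i)))
    (hside : ∀ i, i < c.length → valF f i < valF f c.length) :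
    ∃ a : List A, a.length < c.length ∧
      ∃ g : Fin c.length → Fin a.length,
        Adjacent g ∧ Function.Surjective g ∧
        ((g ⟨c.length - 1, by omega⟩ : Fin a.length) : ℕ) = a.length - 1 ∧
        c = List.ofFn (fun i => a.get (g i)) := by
  have hlen : (c ++ [d]).length = c.length + 1 := by simp
  have hmlt : c.length < (c ++ [d]).length := by omega
  have hpk : valF f c.length < b.length := valF_lt f hmlt
  have hp1 : 1 ≤ valF f c.length := by have := hside 0 hm; omega
  have hsurjF : ∀ j, j < b.length → ∃ i, i < (c ++ [d]).length ∧ valF f i = j :=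
    fun j hj => surj_valF hsurj hj
  have hpk1 : valF f c.length = b.length - 1 := by
    by_contra hcon
    obtain ⟨i, hi, hiv⟩ := hsurjF (valF f c.length + 1) (by omega)
    rcases Nat.lt_or_ge i c.length with h' | h'
    · have := hside i h'; omega
    · have hieq : i = c.length := by omega
      rw [hieq] at hiv; omega
  have hcval : ∀ i (hi : i < c.length),
      c.get ⟨i, hi⟩ = b[valF f i]'(valF_lt f (by omega)) := by
    intro i hi
    have h1 : i < (c ++ [d]).length := by omega
    have h2 := valF_getElem (c ++ [d]) b f heq i h1
    rw [List.getElem_append_left hi] at h2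
    rw [List.get_eq_getElem]
    exact h2
  have ha : (b.take (valF f c.length)).length = valF f c.length := by
    rw [List.length_take]; omega
  refine ⟨b.take (valF f c.length), by omega, ?_⟩
  refine ⟨fun i => ⟨valF f i.1, by rw [ha]; exact hside i.1 i.2⟩, ?_, ?_, ?_, ?_⟩
  · intro i h
    show |((valF f (i + 1) : ℕ) : ℤ) - ((valF f i : ℕ) : ℤ)| ≤ 1
    have := adjacent_valF hadj (show i + 1 < (c ++ [d]).length by omega)
    rw [abs_le]; omega
  · intro j
    have hj : j.1 < valF f c.length := by have := j.isLt; omega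
    obtain ⟨i, hi, hiv⟩ := hsurjF j.1 (by omega)
    have him : i < c.length := by
      rcases Nat.lt_or_ge i c.length with h' | h'
      · exact h'
      · exfalso; have hieq : i = c.length := by omega
        rw [hieq] at hiv; omega
    exact ⟨⟨i, him⟩, Fin.ext hiv⟩
  · show valF f (c.length - 1) = (b.take (valF f c.length)).length - 1
    have hadjF := adjacent_valF hadj (i := c.length - 1)
      (show c.length - 1 + 1 < (c ++ [d]).length by omega)
    rw [show c.length - 1 + 1 = c.length from by omega] at hadjF
    have := hside (c.length - 1) (by omega)
    omega
  · apply List.ext_get (by simp)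
    intro n h1 h2
    rw [hcval n h1]
    simp only [List.get_eq_getElem, List.getElem_ofFn]
    rw [List.getElem_take]

/-- If `d` does not occur in `c` and `c ++ [d]` is not primitive, then neither
is `c`; in fact `c = a^f` for some strictly shorter word `a` and a surjective
adjacent `f` whose last value is the last position of `a`. -/
theorem not_primitive_of_not_primitive_snoc {A : Type*} (c : List A) (d : A)
    (hd : d ∉ c) (h : ¬ Primitive (c ++ [d])) :
    ¬ Primitive c ∧
      ∃ a : List A, a.length < c.length ∧
        ∃ f : Fin c.length → Fin a.length,
          Adjacent f ∧ Function.Surjective f ∧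
          (∀ h0 : 0 < c.length,
            ((f ⟨c.length - 1, by omega⟩ : Fin a.length) : ℕ) = a.length - 1) ∧
          c = List.ofFn (fun i => a.get (f i)) := by
  simp only [Primitive, not_not] at h
  obtain ⟨b, hblen, f, hadj, hsurj, heq⟩ := h
  have hlen : (c ++ [d]).length = c.length + 1 := by simp
  have hk0 : 0 < b.length := Fin.pos (f ⟨0, by omega⟩)
  have hm : 0 < c.length := by omega
  have hmlt : c.length < (c ++ [d]).length := by omega
  have hdval : b[valF f c.length]'(valF_lt f hmlt) = d := by
    rw [← valF_getElem (c ++ [d]) b f heq c.length hmlt]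
    rw [List.getElem_append_right (le_refl c.length)]
    simp
  have hne : ∀ i, i < c.length → valF f i ≠ valF f c.length := by
    intro i hi hcon
    have e1 : b[valF f i]'(valF_lt f (show i < (c ++ [d]).length by omega)) =
        b[valF f c.length]'(valF_lt f hmlt) := by congr 1
    have hci : c.get ⟨i, hi⟩ = d := by
      have h2 := valF_getElem (c ++ [d]) b f heq i (by omega)
      rw [List.getElem_append_left hi] at h2
      rw [List.get_eq_getElem, h2, e1, hdval]
    have : d ∈ c := hci ▸ c.get_mem ⟨i, hi⟩
    exact hd this
  have key : ∀ i, i < c.length →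
      (valF f i < valF f c.length ↔ valF f 0 < valF f c.length) := by
    intro i
    induction i with
    | zero => intro _; exact Iff.rfl
    | succ n ih =>
      intro hi
      have hn := ih (by omega)
      have hadjF := adjacent_valF hadj (show n + 1 < (c ++ [d]).length by omega)
      have h1 := hne n (by omega)
      have h2 := hne (n + 1) hi
      constructor <;> intro <;> omega
  rcases Nat.lt_or_ge (valF f 0) (valF f c.length) with h0 | h0
  · -- everything below the final value
    have hside : ∀ i, i < c.length → valF f i < valF f c.length :=
      fun i hi => (key i hi).2 h0
    obtain ⟨a, halen, g, hg1, hg2, hg3, hg4⟩ :=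
      main_aux c d b (by omega) hm f hadj hsurj heq hside
    exact ⟨fun hp => hp ⟨a, halen, g, hg1, hg2, hg4⟩,
      a, halen, g, hg1, hg2, fun _ => hg3, hg4⟩
  · -- everything above the final value: reverse b
    have hside0 : ∀ i, i < c.length → valF f c.length < valF f i := by
      intro i hi
      have h1 : ¬ (valF f i < valF f c.length) :=
        fun hh => absurd ((key i hi).1 hh) (by omega)
      have h2 := hne i hi
      omega
    let f2 : Fin (c ++ [d]).length → Fin b.reverse.length := fun i =>
      ⟨b.length - 1 - ((f i : Fin b.length) : ℕ), by
        rw [List.length_reverse]; have := (f i).isLt; omega⟩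
    have hf2 : ∀ i (h : i < (c ++ [d]).length),
        valF f2 i = b.length - 1 - valF f i := by
      intro i h
      rw [← valF_eq f2 h, ← valF_eq f h]
    have hadj2 : Adjacent f2 := by
      intro i hi
      show |((b.length - 1 - ((f ⟨i + 1, hi⟩ : Fin b.length) : ℕ) : ℕ) : ℤ) -
        ((b.length - 1 - ((f ⟨i, Nat.lt_of_succ_lt hi⟩ : Fin b.length) : ℕ) : ℕ) : ℤ)| ≤ 1
      have h2 := hadj i hi
      rw [abs_le] at h2 ⊢
      have l1 := (f ⟨i + 1, hi⟩).isLt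
      have l2 := (f ⟨i, Nat.lt_of_succ_lt hi⟩).isLt
      omega
    have hsurj2 : Function.Surjective f2 := by
      intro j
      have hj : (j : ℕ) < b.length := lt_of_lt_of_eq j.isLt List.length_reverse
      obtain ⟨x, hx⟩ := hsurj ⟨b.length - 1 - j.1, by omega⟩
      refine ⟨x, Fin.ext ?_⟩
      show b.length - 1 - ((f x : Fin b.length) : ℕ) = j.1
      have h1 : ((f x : Fin b.length) : ℕ) = b.length - 1 - j.1 := congrArg Fin.val hx
      omega
    have heq2 : c ++ [d] = List.ofFn (fun i => b.reverse.get (f2 i)) := by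
      refine heq.trans (congrArg List.ofFn (funext fun i => ?_))
      show b.get (f i) = b.reverse.get (f2 i)
      simp only [List.get_eq_getElem]
      rw [List.getElem_reverse]
      congr 1
      have := (f i).isLt
      show ((f i : Fin b.length) : ℕ) = b.length - 1 - (b.length - 1 - ((f i : Fin b.length) : ℕ))
      omega
    have hside2 : ∀ i, i < c.length → valF f2 i < valF f2 c.length := by
      intro i hi
      rw [hf2 i (by omega), hf2 c.length (by omega)]
      have h1 := hside0 i hi
      have h2 := valF_lt f (show i < (c ++ [d]).length by omega)
      have h3 := valF_lt f hmlt
      omega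
    obtain ⟨a, halen, g, hg1, hg2, hg3, hg4⟩ :=
      main_aux c d b.reverse (by rw [List.length_reverse]; omega) hm f2 hadj2 hsurj2 heq2 hside2
    exact ⟨fun hp => hp ⟨a, halen, g, hg1, hg2, hg4⟩,
      a, halen, g, hg1, hg2, fun _ => hg3, hg4⟩
end

section
/- For any integer k > 0 there exist a set J with |J| = (k² + k + 1)^(k+1) and a function g : J^k → J such that for every tuple t̄ = (t₁,…,t_k) ∈ J^k: (i) g(t̄) ∉ {t₁,…,t_k}; and (ii) if t̄' ∈ J^k is any tuple whose entries are exactly the elements t₂,…,t_k,g(t̄) in some order (i.e., t̄' is a permutation of the tuple (t₂,…,t_k,g(t̄))), then g(t̄') ∉ {t₁,…,t_k}. -/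
/-- For every `k > 0` there are a set `J` of cardinality `(k² + k + 1)^(k+1)`
and a function `g : J^k → J` such that for every tuple `t`, `g t` avoids the
entries of `t`, and moreover for any tuple `t'` which is a permutation of
`(t₂, …, t_k, g t)`, the value `g t'` also avoids the entries of `t`. -/
theorem circular_witness (k : ℕ) (hk : 0 < k) :
    ∃ (J : Type) (g : (Fin k → J) → J),
      Nat.card J = (k ^ 2 + k + 1) ^ (k + 1) ∧
      ∀ t : Fin k → J,
        (∀ i, g t ≠ t i) ∧
        (∀ t' : Fin k → J,
          (List.ofFn t').Perm ((List.ofFn t).tail ++ [g t]) →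
          ∀ i, g t' ≠ t i) := by
  set q := k ^ 2 + k + 1 with hq
  refine ⟨Fin (k + 1) → Fin q, ?_⟩
  -- symbols appearing in a tuple
  set S : (Fin k → Fin (k + 1) → Fin q) → Finset (Fin q) :=
    fun t => Finset.image (fun p : Fin k × Fin (k + 1) => t p.1 p.2) Finset.univ with hS
  have hfresh : ∀ t, ∃ c : Fin q, c ∉ S t := by
    intro t
    have hcard : (S t).card < Fintype.card (Fin q) := by
      have h1 : (S t).card ≤ Fintype.card (Fin k × Fin (k + 1)) := by
        simpa using Finset.card_image_le (s := (Finset.univ : Finset (Fin k × Fin (k+1))))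
          (f := fun p : Fin k × Fin (k + 1) => t p.1 p.2)
      simp only [Fintype.card_prod, Fintype.card_fin] at h1 ⊢
      have : k * (k + 1) < q := by simp [hq]; nlinarith
      omega
    have : ((S t)ᶜ : Finset (Fin q)).Nonempty := by
      rw [← Finset.card_pos, Finset.card_compl]
      omega
    obtain ⟨c, hc⟩ := this
    exact ⟨c, by simpa using hc⟩
  choose c hc using hfresh
  refine ⟨fun t => Fin.cons (c t) (fun i => t i 0), ?_, ?_⟩
  · simp [Nat.card_eq_fintype_card]
  intro t
  have hmemS : ∀ (t : Fin k → Fin (k + 1) → Fin q) (i : Fin k) (j : Fin (k + 1)),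
      t i j ∈ S t := by
    intro t i j
    exact Finset.mem_image.2 ⟨(i, j), Finset.mem_univ _, rfl⟩
  constructor
  · intro i h
    apply hc t
    have := congrFun h 0
    simp only [Fin.cons_zero] at this
    rw [this]
    exact hmemS t i 0
  · intro t' hp i h
    -- g t is an entry of t'
    have hg : Fin.cons (c t) (fun i => t i 0) ∈ List.ofFn t' := by
      apply hp.mem_iff.2
      simp
    obtain ⟨j, hj⟩ := List.mem_ofFn.1 hg
    apply hc t'
    have h0 := congrFun h 0
    simp only [Fin.cons_zero] at h0
    -- t i 0 is a symbol of g t = t' j, hence of t'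
    have : t i 0 = t' j i.succ := by
      rw [hj]; simp
    rw [h0, this]
    exact hmemS t' j i.succ
end

section
/- Let m ≥ 0, let A be a set, and let a, b, a', b' ∈ A. Suppose F ⊆ A^(2m+4) is a set of words of length 2m+4 over A such that: (seed) the word b^m·b a a' b'·b'^m (m copies of b, then the letters b, a, a', b', then m copies of b') belongs to F; and (closure) for all i, j ∈ {0,1,2,3}, whenever a word s̄·t̄ belongs to F, where |s̄| = |t̄| = m+2, the word ((s̄⁻¹)^{λ_i})⁻¹ · (t̄^{λ_j}) also belongs to F. Then for every c̄ ∈ {a,b}^m and every c̄' ∈ {a',b'}^m, the word c̄·b a a' b'·c̄' belongs to F. -/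
/-- `lam1` (1-indexed: 1,2 ↦ themselves; j ↦ j−1 for j ≥ 3), written 0-indexed. -/
def lam1 (m : ℕ) : Fin (m + 2) → Fin (m + 2) :=
  fun i => if i.val ≤ 1 then i else ⟨i.val - 1, by have := i.isLt; omega⟩

/-- `lam2` (1-indexed: 1,2 ↦ themselves; j ↦ j−2 for j ≥ 3), written 0-indexed. -/
def lam2 (m : ℕ) : Fin (m + 2) → Fin (m + 2) :=
  fun i => if i.val ≤ 1 then i else ⟨i.val - 2, by have := i.isLt; omega⟩

/-- `lam3` (1-indexed: 1,2,3 ↦ themselves; j ↦ j−1 for j ≥ 4), written 0-indexed. -/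
def lam3 (m : ℕ) : Fin (m + 2) → Fin (m + 2) :=
  fun i => if i.val ≤ 2 then i else ⟨i.val - 1, by have := i.isLt; omega⟩

/-- Concatenation of two words of length `m+2` into a word of length `2m+4`. -/
def concatW {A : Type*} (m : ℕ) (s t : Fin (m + 2) → A) : Fin (2 * m + 4) → A :=
  fun i =>
    if h : i.val < m + 2 then s ⟨i.val, h⟩
    else t ⟨i.val - (m + 2), by have := i.isLt; omega⟩

/-- Reversal of a word. -/
def wrev {n : ℕ} {A : Type*} (w : Fin n → A) : Fin n → A := w ∘ Fin.rev

section Aux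
variable {A : Type*}

lemma wrev_wrev {n : ℕ} (w : Fin n → A) : wrev (wrev w) = w := by
  funext i; simp [wrev, Fin.rev_rev]

def tw (m : ℕ) (y : A) (d : Fin m → A) (k : ℕ) : A :=
  if h : k < m then d ⟨k, h⟩ else y

lemma tw_lt {m : ℕ} (y : A) (d : Fin m → A) {k : ℕ} (h : k < m) :
    tw m y d k = d ⟨k, h⟩ := dif_pos h

lemma tw_ge {m : ℕ} (y : A) (d : Fin m → A) {k : ℕ} (h : m ≤ k) :
    tw m y d k = y := dif_neg (by omega)

def Tw (m : ℕ) (x y : A) (d : Fin m → A) (j : ℕ) : Fin (m + 2) → A :=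
  fun i => if i.val = 0 then x else if i.val = 1 then y else tw m y d (j + (i.val - 2))

lemma Tw_of_ge {m : ℕ} (x y : A) (d : Fin m → A) {j j' : ℕ} (h : m ≤ j) (h' : m ≤ j') :
    Tw m x y d j = Tw m x y d j' := by
  funext i
  simp only [Tw]
  split_ifs with h0 h1
  · rfl
  · rfl
  · rw [tw_ge y d (by omega), tw_ge y d (by omega)]

lemma Tw_lam1 {m : ℕ} (x y : A) (d : Fin m → A) {j : ℕ} (hj : j < m)
    (hy : d ⟨j, hj⟩ = y) : Tw m x y d j = Tw m x y d (j + 1) ∘ lam1 m := by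
  funext i
  by_cases h1 : i.val ≤ 1
  · have h : i.val = 0 ∨ i.val = 1 := by omega
    simp only [Tw, lam1, Function.comp_apply, if_pos h1]
    rcases h with h | h <;> simp [h]
  · have h3 : (Tw m x y d (j + 1) ∘ lam1 m) i
        = if i.val - 1 = 0 then x else if i.val - 1 = 1 then y
          else tw m y d (j + 1 + (i.val - 1 - 2)) := by
      simp only [Function.comp_apply, lam1, if_neg h1, Tw]
    rw [h3]
    simp only [Tw, if_neg (by omega : ¬ i.val = 0), if_neg (by omega : ¬ i.val = 1),
      if_neg (by omega : ¬ i.val - 1 = 0)]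
    by_cases h2 : i.val = 2
    · rw [if_pos (by omega), show j + (i.val - 2) = j from by omega, tw_lt y d hj, hy]
    · rw [if_neg (by omega)]
      congr 1; omega

lemma Tw_lam3 {m : ℕ} (x y : A) (d : Fin m → A) {j : ℕ} (hj : j + 1 < m)
    (hx : d ⟨j, by omega⟩ = d ⟨j + 1, hj⟩) :
    Tw m x y d j = Tw m x y d (j + 1) ∘ lam3 m := by
  funext i
  by_cases h1 : i.val ≤ 2
  · have h : i.val = 0 ∨ i.val = 1 ∨ i.val = 2 := by omega
    simp only [Tw, lam3, Function.comp_apply, if_pos h1]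
    rcases h with h | h | h <;> simp [h]
    rw [tw_lt y d (show j < m by omega), tw_lt y d hj]
    exact hx
  · have h3 : (Tw m x y d (j + 1) ∘ lam3 m) i
        = if i.val - 1 = 0 then x else if i.val - 1 = 1 then y
          else tw m y d (j + 1 + (i.val - 1 - 2)) := by
      simp only [Function.comp_apply, lam3, if_neg h1, Tw]
    rw [h3]
    simp only [Tw, if_neg (by omega : ¬ i.val = 0), if_neg (by omega : ¬ i.val = 1),
      if_neg (by omega : ¬ i.val - 1 = 0), if_neg (by omega : ¬ i.val - 1 = 1)]
    congr 1; omega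

lemma Tw_lam2 {m : ℕ} (x y : A) (d : Fin m → A) {j : ℕ} (hj : j < m)
    (hx : d ⟨j, hj⟩ = x)
    (hy : ∀ h : j + 1 < m, d ⟨j + 1, h⟩ = y) :
    Tw m x y d j = Tw m x y d (j + 2) ∘ lam2 m := by
  funext i
  by_cases h1 : i.val ≤ 1
  · have h : i.val = 0 ∨ i.val = 1 := by omega
    simp only [lam2, Function.comp_apply, if_pos h1, Tw]
    rcases h with h | h <;> simp [h]
  · have h3 : (Tw m x y d (j + 2) ∘ lam2 m) i
        = if i.val - 2 = 0 then x else if i.val - 2 = 1 then y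
          else tw m y d (j + 2 + (i.val - 2 - 2)) := by
      simp only [Function.comp_apply, lam2, if_neg h1, Tw]
    rw [h3]
    simp only [Tw, if_neg (by omega : ¬ i.val = 0), if_neg (by omega : ¬ i.val = 1)]
    by_cases h2 : i.val = 2
    · rw [if_pos (by omega : i.val - 2 = 0), show j + (i.val - 2) = j from by omega,
        tw_lt y d hj, hx]
    · by_cases h4 : i.val = 3
      · rw [if_neg (by omega), if_pos (by omega),
          show j + (i.val - 2) = j + 1 from by omega]
        by_cases h5 : j + 1 < m
        · rw [tw_lt y d h5, hy h5]
        · rw [tw_ge y d (by omega)]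
      · rw [if_neg (by omega), if_neg (by omega)]
        congr 1; omega

end Aux

lemma core {A : Type*} {m : ℕ} (x y : A) (d : Fin m → A) (G : Set (Fin (m + 2) → A))
    (h1 : ∀ u ∈ G, u ∘ lam1 m ∈ G)
    (h2 : ∀ u ∈ G, u ∘ lam2 m ∈ G)
    (h3 : ∀ u ∈ G, u ∘ lam3 m ∈ G)
    (hs : Tw m x y d m ∈ G)
    (hd : ∀ i, d i = x ∨ d i = y) :
    Tw m x y d 0 ∈ G := by
  have key : ∀ k, Tw m x y d (m - k) ∈ G := by
    intro k
    induction k using Nat.strong_induction_on with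
    | _ k IH =>
      match k with
      | 0 => simpa using hs
      | (k + 1) =>
        by_cases hk : m ≤ k
        · rw [show m - (k + 1) = m - m from by omega]
          exact IH m (by omega)
        push_neg at hk
        set j := m - (k + 1) with hjdef
        have hj : j < m := by omega
        have hj1 : m - k = j + 1 := by omega
        rcases hd ⟨j, hj⟩ with hx | hy
        · by_cases h5 : j + 1 < m
          · rcases hd ⟨j + 1, h5⟩ with hx2 | hy2
            · rw [Tw_lam3 x y d h5 (by rw [hx, hx2])]
              exact h3 _ (hj1 ▸ IH k (by omega))
            · rw [Tw_lam2 x y d hj hx (fun _ => hy2)]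
              have hg : Tw m x y d (j + 2) ∈ G := by
                rcases Nat.lt_or_ge (j + 2) m with h6 | h6
                · rw [show j + 2 = m - (k - 1) from by omega]
                  exact IH (k - 1) (by omega)
                · rw [Tw_of_ge x y d h6 (le_refl m)]; exact hs
              exact h2 _ hg
          · rw [Tw_lam2 x y d hj hx (fun h => absurd h h5)]
            have hg : Tw m x y d (j + 2) ∈ G := by
              rw [Tw_of_ge x y d (by omega) (le_refl m)]; exact hs
            exact h2 _ hg
        · rw [Tw_lam1 x y d hj hy]
          exact h1 _ (hj1 ▸ IH k (by omega))
  simpa using key m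

/-- If `F` contains the seed word `b^m·b a a' b'·b'^m` and is closed under the
operation sending `s̄·t̄` to `((s̄⁻¹)^{λᵢ})⁻¹·(t̄^{λⱼ})` for `i, j ∈ {0,1,2,3}`
(`λ₀` being the identity), then `F` contains every word `c̄·b a a' b'·c̄'` with
`c̄ ∈ {a,b}^m` and `c̄' ∈ {a',b'}^m`. -/
theorem generation_of_guard_tuples {A : Type*} (m : ℕ) (a b a' b' : A)
    (F : Set (Fin (2 * m + 4) → A))
    (hseed : (fun i : Fin (2 * m + 4) =>
        if i.val ≤ m then b
        else if i.val = m + 1 then a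
        else if i.val = m + 2 then a'
        else b') ∈ F)
    (hclose : ∀ li ∈ ({id, lam1 m, lam2 m, lam3 m} : Set (Fin (m + 2) → Fin (m + 2))),
        ∀ lj ∈ ({id, lam1 m, lam2 m, lam3 m} : Set (Fin (m + 2) → Fin (m + 2))),
        ∀ s t : Fin (m + 2) → A, concatW m s t ∈ F →
          concatW m (wrev (wrev s ∘ li)) (t ∘ lj) ∈ F) :
    ∀ c c' : Fin m → A,
      (∀ i, c i = a ∨ c i = b) → (∀ i, c' i = a' ∨ c' i = b') →
      (fun i : Fin (2 * m + 4) =>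
        if h0 : i.val < m then c ⟨i.val, h0⟩
        else if h1 : i.val = m then b
        else if h2 : i.val = m + 1 then a
        else if h3 : i.val = m + 2 then a'
        else if h4 : i.val = m + 3 then b'
        else c' ⟨i.val - (m + 4), by have := i.isLt; omega⟩) ∈ F := by
  intro c c' hc hc'
  have hid : (id : Fin (m+2) → Fin (m+2)) ∈
      ({id, lam1 m, lam2 m, lam3 m} : Set (Fin (m + 2) → Fin (m + 2))) := by
    left; rfl
  have h1m : lam1 m ∈ ({id, lam1 m, lam2 m, lam3 m} : Set (Fin (m + 2) → Fin (m + 2))) := by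
    right; left; rfl
  have h2m : lam2 m ∈ ({id, lam1 m, lam2 m, lam3 m} : Set (Fin (m + 2) → Fin (m + 2))) := by
    right; right; left; rfl
  have h3m : lam3 m ∈ ({id, lam1 m, lam2 m, lam3 m} : Set (Fin (m + 2) → Fin (m + 2))) := by
    right; right; right; rfl
  -- the left half of the seed word
  set sseed : Fin (m + 2) → A := (fun i => if i.val ≤ m then b else a) with hsseed
  -- Stage A : generate the right half
  set G : Set (Fin (m + 2) → A) := {t | concatW m sseed t ∈ F} with hG
  have hGclosed : ∀ lj ∈ ({id, lam1 m, lam2 m, lam3 m} :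
      Set (Fin (m + 2) → Fin (m + 2))), ∀ t ∈ G, t ∘ lj ∈ G := by
    intro lj hlj t ht
    have h := hclose id hid lj hlj sseed t ht
    rwa [Function.comp_id, wrev_wrev] at h
  have hF0 : Tw m a' b' c' m ∈ G := by
    show concatW m sseed (Tw m a' b' c' m) ∈ F
    have he : concatW m sseed (Tw m a' b' c' m) = (fun i : Fin (2 * m + 4) =>
        if i.val ≤ m then b
        else if i.val = m + 1 then a
        else if i.val = m + 2 then a'
        else b') := by
      funext i
      simp only [concatW, hsseed, Tw, tw]
      split_ifs <;> first | rfl | omega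
    rw [he]; exact hseed
  have hA : Tw m a' b' c' 0 ∈ G :=
    core a' b' c' G (fun u hu => hGclosed _ h1m u hu) (fun u hu => hGclosed _ h2m u hu)
      (fun u hu => hGclosed _ h3m u hu) hF0 hc'
  -- Stage B : generate the left half
  set dd : Fin m → A := (fun i => c ⟨m - 1 - i.val, by have := i.isLt; omega⟩) with hdd
  set G2 : Set (Fin (m + 2) → A) := {u | concatW m (wrev u) (Tw m a' b' c' 0) ∈ F} with hG2
  have hG2closed : ∀ li ∈ ({id, lam1 m, lam2 m, lam3 m} :
      Set (Fin (m + 2) → Fin (m + 2))), ∀ u ∈ G2, u ∘ li ∈ G2 := by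
    intro li hli u hu
    have h := hclose li hli id hid (wrev u) (Tw m a' b' c' 0) hu
    rwa [Function.comp_id, wrev_wrev] at h
  have hB0 : Tw m a b dd m ∈ G2 := by
    show concatW m (wrev (Tw m a b dd m)) (Tw m a' b' c' 0) ∈ F
    have he : wrev (Tw m a b dd m) = sseed := by
      funext i
      simp only [wrev, Function.comp_apply, Tw, tw, hsseed]
      have hr : (Fin.rev i).val = m + 1 - i.val := by
        rw [Fin.val_rev]; omega
      split_ifs <;> first | rfl | omega
    rw [he]; exact hA
  have hB : Tw m a b dd 0 ∈ G2 :=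
    core a b dd G2 (fun u hu => hG2closed _ h1m u hu) (fun u hu => hG2closed _ h2m u hu)
      (fun u hu => hG2closed _ h3m u hu) hB0 (fun i => hc _)
  -- Final rewriting
  have hfin : (fun i : Fin (2 * m + 4) =>
        if h0 : i.val < m then c ⟨i.val, h0⟩
        else if h1 : i.val = m then b
        else if h2 : i.val = m + 1 then a
        else if h3 : i.val = m + 2 then a'
        else if h4 : i.val = m + 3 then b'
        else c' ⟨i.val - (m + 4), by have := i.isLt; omega⟩)
      = concatW m (wrev (Tw m a b dd 0)) (Tw m a' b' c' 0) := by
    funext i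
    simp only [concatW, wrev, Function.comp_apply, Tw, tw, hdd]
    by_cases h : i.val < m + 2
    · rw [dif_pos h]
      have hr : (Fin.rev (⟨i.val, h⟩ : Fin (m + 2))).val = m + 1 - i.val := by
        simp only [Fin.val_rev, Fin.val_mk]; omega
      rw [hr]
      by_cases h0 : i.val < m
      · rw [dif_pos h0, if_neg (by omega : ¬ (m + 1 - i.val = 0)),
          if_neg (by omega : ¬ (m + 1 - i.val = 1)),
          dif_pos (by omega : 0 + (m + 1 - i.val - 2) < m)]
        exact congrArg c (Fin.ext (by simp only [Fin.val_mk]; omega))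
      · rw [dif_neg h0]
        by_cases h1 : i.val = m
        · rw [dif_pos h1, if_neg (by omega), if_pos (by omega)]
        · rw [dif_neg h1, dif_pos (by omega : i.val = m + 1), if_pos (by omega)]
    · rw [dif_neg h]
      rw [dif_neg (by omega : ¬ i.val < m), dif_neg (by omega : ¬ i.val = m),
        dif_neg (by omega : ¬ i.val = m + 1)]
      by_cases h2 : i.val = m + 2
      · rw [dif_pos h2, if_pos (by omega)]
      · rw [dif_neg h2]
        by_cases h3 : i.val = m + 3
        · rw [dif_pos h3, if_neg (by omega), if_pos (by omega)]
        · rw [dif_neg h3, if_neg (by omega : ¬ (i.val - (m + 2) = 0)),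
            if_neg (by omega : ¬ (i.val - (m + 2) = 1)),
            dif_pos (show 0 + (i.val - (m + 2) - 2) < m by have := i.isLt; omega)]
          exact (congrArg c' (Fin.ext (by simp only [Fin.val_mk]; omega))).symm
  rw [hfin]
  exact hB
end

section
/- Modes of generation are not unique even for primitive generators: for pairwise distinct elements a, b, c, d of a set A, the word ā = abcbd is a primitive generator of the word c̄ = abcbcbd, and there exist two distinct surjective adjacent functions f, g : {1,…,7} → {1,…,5} such that ā^f = ā^g = c̄. -/
lemma no_short_generator {A : Type*} (a b c d : A)
    (hab : a ≠ b) (hac : a ≠ c) (had : a ≠ d)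
    (hbc : b ≠ c) (hbd : b ≠ d) (hcd : c ≠ d) :
    ¬ ∃ w : List A, w.length < ([a, b, c, b, d] : List A).length ∧ Generates w [a, b, c, b, d] := by
  rintro ⟨w, hlen, f, hadj, -, heq⟩
  have hlen5 : w.length < 5 := hlen
  have h0 : (0:ℕ) < ([a, b, c, b, d] : List A).length := by norm_num
  have h1 : (1:ℕ) < ([a, b, c, b, d] : List A).length := by norm_num
  have h2 : (2:ℕ) < ([a, b, c, b, d] : List A).length := by norm_num
  have h3 : (3:ℕ) < ([a, b, c, b, d] : List A).length := by norm_num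
  have h4 : (4:ℕ) < ([a, b, c, b, d] : List A).length := by norm_num
  have keyE : ∀ (i : ℕ) (hi : i < ([a, b, c, b, d] : List A).length),
      w.get (f ⟨i, hi⟩) = ([a, b, c, b, d] : List A)[i]'hi := by
    intro i hi
    have h' := List.getElem_of_eq heq hi
    rw [List.getElem_ofFn] at h'
    exact h'.symm
  have e0 : w.get (f ⟨0, h0⟩) = a := keyE 0 h0
  have e1 : w.get (f ⟨1, h1⟩) = b := keyE 1 h1
  have e2 : w.get (f ⟨2, h2⟩) = c := keyE 2 h2
  have e3 : w.get (f ⟨3, h3⟩) = b := keyE 3 h3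
  have e4 : w.get (f ⟨4, h4⟩) = d := keyE 4 h4
  have ne : ∀ (p q : Fin w.length) (x y : A), w.get p = x → w.get q = y → x ≠ y →
      ((p : ℕ) ≠ (q : ℕ)) := by
    intro p q x y hx hy hxy hv
    exact hxy (hx ▸ hy ▸ congrArg w.get (Fin.ext hv))
  have a01 : -1 ≤ (((f ⟨1, h1⟩ : Fin w.length) : ℕ) : ℤ) - (((f ⟨0, h0⟩ : Fin w.length) : ℕ) : ℤ) ∧
      (((f ⟨1, h1⟩ : Fin w.length) : ℕ) : ℤ) - (((f ⟨0, h0⟩ : Fin w.length) : ℕ) : ℤ) ≤ 1 :=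
    abs_le.mp (hadj 0 h1)
  have a12 : -1 ≤ (((f ⟨2, h2⟩ : Fin w.length) : ℕ) : ℤ) - (((f ⟨1, h1⟩ : Fin w.length) : ℕ) : ℤ) ∧
      (((f ⟨2, h2⟩ : Fin w.length) : ℕ) : ℤ) - (((f ⟨1, h1⟩ : Fin w.length) : ℕ) : ℤ) ≤ 1 :=
    abs_le.mp (hadj 1 h2)
  have a23 : -1 ≤ (((f ⟨3, h3⟩ : Fin w.length) : ℕ) : ℤ) - (((f ⟨2, h2⟩ : Fin w.length) : ℕ) : ℤ) ∧
      (((f ⟨3, h3⟩ : Fin w.length) : ℕ) : ℤ) - (((f ⟨2, h2⟩ : Fin w.length) : ℕ) : ℤ) ≤ 1 :=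
    abs_le.mp (hadj 2 h3)
  have a34 : -1 ≤ (((f ⟨4, h4⟩ : Fin w.length) : ℕ) : ℤ) - (((f ⟨3, h3⟩ : Fin w.length) : ℕ) : ℤ) ∧
      (((f ⟨4, h4⟩ : Fin w.length) : ℕ) : ℤ) - (((f ⟨3, h3⟩ : Fin w.length) : ℕ) : ℤ) ≤ 1 :=
    abs_le.mp (hadj 3 h4)
  have n01 := ne _ _ _ _ e0 e1 hab
  have n02 := ne _ _ _ _ e0 e2 hac
  have n03 := ne _ _ _ _ e0 e3 hab
  have n04 := ne _ _ _ _ e0 e4 had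
  have n12 := ne _ _ _ _ e1 e2 hbc
  have n14 := ne _ _ _ _ e1 e4 hbd
  have n23 := ne _ _ _ _ e2 e3 hbc.symm
  have n24 := ne _ _ _ _ e2 e4 hcd
  have n34 := ne _ _ _ _ e3 e4 hbd
  have b0 := (f ⟨0, h0⟩).isLt
  have b1 := (f ⟨1, h1⟩).isLt
  have b2 := (f ⟨2, h2⟩).isLt
  have b3 := (f ⟨3, h3⟩).isLt
  have b4 := (f ⟨4, h4⟩).isLt
  omega

/-- Modes of generation are not unique: `abcbd` is a primitive generator of
`abcbcbd`, via two distinct surjective adjacent functions. -/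
theorem modes_of_generation_not_unique {A : Type*} (a b c d : A)
    (hab : a ≠ b) (hac : a ≠ c) (had : a ≠ d)
    (hbc : b ≠ c) (hbd : b ≠ d) (hcd : c ≠ d) :
    PrimitiveGenerator [a, b, c, b, d] [a, b, c, b, c, b, d] ∧
    ∃ f g : Fin 7 → Fin 5, f ≠ g ∧
      (Adjacent f ∧ Function.Surjective f ∧
        ([a, b, c, b, c, b, d] : List A) =
          List.ofFn (fun i => [a, b, c, b, d].get (f i))) ∧
      (Adjacent g ∧ Function.Surjective g ∧
        ([a, b, c, b, c, b, d] : List A) =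
          List.ofFn (fun i => [a, b, c, b, d].get (g i))) := by
  have hf : Adjacent (![0,1,2,1,2,3,4] : Fin 7 → Fin 5) ∧
      Function.Surjective (![0,1,2,1,2,3,4] : Fin 7 → Fin 5) ∧
      ([a, b, c, b, c, b, d] : List A) =
        List.ofFn (fun i => [a, b, c, b, d].get ((![0,1,2,1,2,3,4] : Fin 7 → Fin 5) i)) := by
    refine ⟨?_, by decide, ?_⟩
    · intro i h
      have h6 : i < 6 := by omega
      interval_cases i <;> exact of_decide_eq_true rfl
    · simp [List.ofFn_succ]
  have hg : Adjacent (![0,1,2,3,2,3,4] : Fin 7 → Fin 5) ∧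
      Function.Surjective (![0,1,2,3,2,3,4] : Fin 7 → Fin 5) ∧
      ([a, b, c, b, c, b, d] : List A) =
        List.ofFn (fun i => [a, b, c, b, d].get ((![0,1,2,3,2,3,4] : Fin 7 → Fin 5) i)) := by
    refine ⟨?_, by decide, ?_⟩
    · intro i h
      have h6 : i < 6 := by omega
      interval_cases i <;> exact of_decide_eq_true rfl
    · simp [List.ofFn_succ]
  refine ⟨⟨?_, ?_⟩, ![0,1,2,1,2,3,4], ![0,1,2,3,2,3,4], by decide, hf, hg⟩
  · exact no_short_generator a b c d hab hac had hbc hbd hcd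
  · exact ⟨show Fin 7 → Fin 5 from ![0,1,2,1,2,3,4], hf⟩
end
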